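/- Let u be an infinite word over a finite alphabet A with k = #A letters, whose language is closed under reversal and whose factor complexity satisfies C(n) = (k−1)n + 1 for all n ∈ ℕ. Then the palindromic complexity of u satisfies P(n) + P(n+1) = k + 1 for all n ∈ ℕ if and only if every bispecial factor w of u satisfies: if w is non-palindromic then b(w) = 0, and if w is a palindrome then b(w) = #Pext(w) − 1. -/

import Mathlib

open List

/-- The factor of `u` of length `n` starting at position `i`. -/
def word {A : Type*} (u : ℕ → A) (i n : ℕ) : List A :=
  (List.range n).map (fun j => u (i + j))

/-- `w` occurs in `u` at position `i`. -/
def OccursAt {A : Type*} (u : ℕ → A) (w : List A) (i : ℕ) : Prop :=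
  w = word u i w.length

/-- `w` is a factor of the infinite word `u`. -/
def IsFactor {A : Type*} (u : ℕ → A) (w : List A) : Prop :=
  ∃ i, OccursAt u w i

/-- Every letter of the alphabet occurs in `u`. -/
def AllLettersOccur {A : Type*} (u : ℕ → A) : Prop :=
  ∀ a : A, ∃ i, u i = a

/-- The language of `u` is closed under reversal. -/
def ClosedUnderReversal {A : Type*} (u : ℕ → A) : Prop :=
  ∀ w : List A, IsFactor u w → IsFactor u w.reverse

/-- `u` is uniformly recurrent: every factor occurs in every window of some
bounded length. -/
def UniformlyRecurrent {A : Type*} (u : ℕ → A) : Prop :=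
  ∀ w : List A, IsFactor u w → ∃ N : ℕ, ∀ i : ℕ, ∃ j : ℕ,
    i ≤ j ∧ j < i + N ∧ OccursAt u w j

/-- Factor complexity: the number of factors of `u` of length `n`. -/
noncomputable def complexity {A : Type*} (u : ℕ → A) (n : ℕ) : ℕ :=
  Set.ncard {w : List A | w.length = n ∧ IsFactor u w}

/-- Palindromic complexity: the number of palindromic factors of `u` of
length `n`. -/
noncomputable def palComplexity {A : Type*} (u : ℕ → A) (n : ℕ) : ℕ :=
  Set.ncard {w : List A | w.length = n ∧ IsFactor u w ∧ w.reverse = w}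

/-- The number of distinct palindromic factors of a finite word
(the empty word included). -/
noncomputable def palCount {A : Type*} (w : List A) : ℕ :=
  Set.ncard {v : List A | v <:+: w ∧ v.reverse = v}

/-- `u` is rich in palindromes. -/
def Rich {A : Type*} (u : ℕ → A) : Prop :=
  ∀ w : List A, IsFactor u w → palCount w = w.length + 1

/-- `j < k` are two successive occurrences of `w` in `u`. -/
def SuccOccurrences {A : Type*} (u : ℕ → A) (w : List A) (j k : ℕ) : Prop :=
  OccursAt u w j ∧ OccursAt u w k ∧ j < k ∧
    ∀ l : ℕ, j < l → l < k → ¬ OccursAt u w l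

/-- The set of return words of the factor `w` in `u`. -/
def returnWords {A : Type*} (u : ℕ → A) (w : List A) : Set (List A) :=
  {v | ∃ j k : ℕ, SuccOccurrences u w j k ∧ v = word u j (k - j)}

/-- Left extensions of `w` in `u`. -/
def Lext {A : Type*} (u : ℕ → A) (w : List A) : Set A :=
  {a | IsFactor u (a :: w)}

/-- Right extensions of `w` in `u`. -/
def Rext {A : Type*} (u : ℕ → A) (w : List A) : Set A :=
  {b | IsFactor u (w ++ [b])}

/-- Bilateral extensions of `w` in `u`. -/
def Bext {A : Type*} (u : ℕ → A) (w : List A) : Set (A × A) :=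
  {p | IsFactor u (p.1 :: (w ++ [p.2]))}

/-- Palindromic extensions of a (palindromic) factor `w` of `u`. -/
def Pext {A : Type*} (u : ℕ → A) (w : List A) : Set (List A) :=
  {v | ∃ a : A, v = a :: (w ++ [a]) ∧ IsFactor u v}

/-- `w` is a bispecial factor of `u`. -/
def Bispecial {A : Type*} (u : ℕ → A) (w : List A) : Prop :=
  IsFactor u w ∧ 2 ≤ Set.ncard (Lext u w) ∧ 2 ≤ Set.ncard (Rext u w)

/-- The bilateral order of a factor `w` of `u`. -/
noncomputable def bilateralOrder {A : Type*} (u : ℕ → A) (w : List A) : ℤ :=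
  (Set.ncard (Bext u w) : ℤ) - Set.ncard (Rext u w) - Set.ncard (Lext u w) + 1

/-- `u` is eventually periodic. -/
def EventuallyPeriodic {A : Type*} (u : ℕ → A) : Prop :=
  ∃ p : ℕ, 0 < p ∧ ∃ N : ℕ, ∀ n : ℕ, N ≤ n → u (n + p) = u n

/-- `u` is aperiodic. -/
def Aperiodic {A : Type*} (u : ℕ → A) : Prop :=
  ¬ EventuallyPeriodic u

/-- `u` is (1-)balanced. -/
def IsBalanced {A : Type*} [DecidableEq A] (u : ℕ → A) : Prop :=
  ∀ a : A, ∀ w v : List A, IsFactor u w → IsFactor u v → w.length = v.length →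
    |(w.count a : ℤ) - (v.count a : ℤ)| ≤ 1

section Aux
variable {A : Type*} (u : ℕ → A)

lemma word_length (i n : ℕ) : (word u i n).length = n := by
  simp [word]

lemma word_append (i a b : ℕ) :
    word u i (a + b) = word u i a ++ word u (i + a) b := by
  simp [word, List.range_add, Function.comp, add_assoc]

lemma occursAt_word (i n : ℕ) : OccursAt u (word u i n) i := by
  simp [OccursAt, word_length]

lemma isFactor_word (i n : ℕ) : IsFactor u (word u i n) := ⟨i, occursAt_word u i n⟩

lemma isFactor_infix {w v : List A} (hw : IsFactor u w) (hv : v <:+: w) :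
    IsFactor u v := by
  obtain ⟨i, hi⟩ := hw
  obtain ⟨s, t, hst⟩ := hv
  refine ⟨i + s.length, ?_⟩
  have hw' : w = word u i w.length := hi
  have hlen : w.length = s.length + (v.length + t.length) := by
    rw [← hst]; simp [add_assoc]
  rw [hlen, word_append, word_append] at hw'
  rw [← hst, List.append_assoc] at hw'
  have h1 := (List.append_inj hw' (by simp [word_length])).2
  have h2 := (List.append_inj h1 (by simp [word_length])).1
  exact h2

lemma isFactor_prefix {w v : List A} (hw : IsFactor u w) (hv : v <+: w) :
    IsFactor u v := isFactor_infix u hw hv.isInfix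

lemma isFactor_suffix {w v : List A} (hw : IsFactor u w) (hv : v <:+ w) :
    IsFactor u v := isFactor_infix u hw hv.isInfix

lemma factor_snoc {w : List A} (hw : IsFactor u w) :
    ∃ b, IsFactor u (w ++ [b]) := by
  obtain ⟨i, hi⟩ := hw
  refine ⟨u (i + w.length), i, ?_⟩
  have : word u i (w.length + 1) = word u i w.length ++ [u (i + w.length)] := by
    rw [word_append]; simp [word, List.range_succ]
  simp only [OccursAt, List.length_append, List.length_singleton]
  rw [this, ← hi]

variable {u} in
lemma isFactor_reverse (hcur : ClosedUnderReversal u) {w : List A}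
    (hw : IsFactor u w.reverse) : IsFactor u w := by
  simpa using hcur _ hw

variable {u} in
lemma factor_cons (hcur : ClosedUnderReversal u) {w : List A} (hw : IsFactor u w) :
    ∃ a, IsFactor u (a :: w) := by
  obtain ⟨b, hb⟩ := factor_snoc u (hcur w hw)
  refine ⟨b, isFactor_reverse hcur ?_⟩
  simpa using hb

end Aux

noncomputable section Count
open Classical
variable {A : Type*} [Fintype A] (u : ℕ → A)

lemma finite_factors (n : ℕ) : {w : List A | w.length = n ∧ IsFactor u w}.Finite :=
  (List.finite_length_eq A n).subset (fun _ hw => hw.1)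

lemma finite_palfactors (n : ℕ) :
    {w : List A | w.length = n ∧ IsFactor u w ∧ w.reverse = w}.Finite :=
  (List.finite_length_eq A n).subset (fun _ hw => hw.1)

def Ln (n : ℕ) : Finset (List A) := (finite_factors u n).toFinset
def PalF (n : ℕ) : Finset (List A) := (finite_palfactors u n).toFinset

@[simp] lemma mem_Ln {n : ℕ} {w : List A} :
    w ∈ Ln u n ↔ w.length = n ∧ IsFactor u w := by
  simp [Ln]

@[simp] lemma mem_PalF {n : ℕ} {w : List A} :
    w ∈ PalF u n ↔ w.length = n ∧ IsFactor u w ∧ w.reverse = w := by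
  simp [PalF]

lemma complexity_eq (n : ℕ) : complexity u n = (Ln u n).card :=
  Set.ncard_eq_toFinset_card _ (finite_factors u n)

lemma palComplexity_eq (n : ℕ) : palComplexity u n = (PalF u n).card :=
  Set.ncard_eq_toFinset_card _ (finite_palfactors u n)

def RextF (w : List A) : Finset A := (Set.toFinite (Rext u w)).toFinset
def LextF (w : List A) : Finset A := (Set.toFinite (Lext u w)).toFinset
def BextF (w : List A) : Finset (A × A) := (Set.toFinite (Bext u w)).toFinset

lemma finite_pext (w : List A) : (Pext u w).Finite :=
  (List.finite_length_eq A (w.length + 2)).subset (by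
    rintro v ⟨a, rfl, -⟩; simp)

def PextF (w : List A) : Finset (List A) := (finite_pext u w).toFinset

@[simp] lemma mem_RextF {w : List A} {b : A} :
    b ∈ RextF u w ↔ IsFactor u (w ++ [b]) := by simp [RextF, Rext]
@[simp] lemma mem_LextF {w : List A} {a : A} :
    a ∈ LextF u w ↔ IsFactor u (a :: w) := by simp [LextF, Lext]
@[simp] lemma mem_BextF {w : List A} {p : A × A} :
    p ∈ BextF u w ↔ IsFactor u (p.1 :: (w ++ [p.2])) := by simp [BextF, Bext]
@[simp] lemma mem_PextF {w v : List A} :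
    v ∈ PextF u w ↔ ∃ a : A, v = a :: (w ++ [a]) ∧ IsFactor u v := by
  simp [PextF, Pext]

lemma rext_card (w : List A) : Set.ncard (Rext u w) = (RextF u w).card :=
  Set.ncard_eq_toFinset_card _ _
lemma lext_card (w : List A) : Set.ncard (Lext u w) = (LextF u w).card :=
  Set.ncard_eq_toFinset_card _ _
lemma bext_card (w : List A) : Set.ncard (Bext u w) = (BextF u w).card :=
  Set.ncard_eq_toFinset_card _ _
lemma pext_card (w : List A) : Set.ncard (Pext u w) = (PextF u w).card :=
  Set.ncard_eq_toFinset_card _ _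

end Count

noncomputable section Count2
variable {A : Type*} [Fintype A] (u : ℕ → A)

lemma Ln_succ_right (n : ℕ) [DecidableEq (List A)] :
    Ln u (n + 1) = (Ln u n).biUnion
      (fun w => (RextF u w).image (fun b => w ++ [b])) := by
  ext v
  simp only [mem_Ln, Finset.mem_biUnion, Finset.mem_image, mem_RextF]
  constructor
  · rintro ⟨hlen, hfac⟩
    have hne : v ≠ [] := by intro h; simp [h] at hlen
    refine ⟨v.dropLast, ⟨?_, ?_⟩, v.getLast hne, ?_, ?_⟩
    · simp [List.length_dropLast, hlen]
    · exact isFactor_prefix u hfac (List.dropLast_prefix v)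
    · rwa [List.dropLast_append_getLast hne]
    · exact List.dropLast_append_getLast hne
  · rintro ⟨w, ⟨hlen, -⟩, b, hb, rfl⟩
    exact ⟨by simp [hlen], hb⟩

lemma card_Ln_succ_right (n : ℕ) :
    (Ln u (n + 1)).card = ∑ w ∈ Ln u n, (RextF u w).card := by
  classical
  rw [Ln_succ_right u n, Finset.card_biUnion]
  · refine Finset.sum_congr rfl fun w _ => ?_
    exact Finset.card_image_of_injective _ (fun a b h => by simpa using h)
  · intro w hw w' hw' hne
    simp only [Finset.disjoint_left, Finset.mem_image]
    rintro v ⟨b, -, rfl⟩ ⟨b', -, h⟩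
    have h2 : w' = w := by simpa using congrArg List.dropLast h
    exact hne h2.symm

lemma Ln_succ_left (n : ℕ) [DecidableEq (List A)] :
    Ln u (n + 1) = (Ln u n).biUnion
      (fun w => (LextF u w).image (fun a => a :: w)) := by
  ext v
  simp only [mem_Ln, Finset.mem_biUnion, Finset.mem_image, mem_LextF]
  constructor
  · rintro ⟨hlen, hfac⟩
    match v with
    | a :: w =>
      refine ⟨w, ⟨by simpa using hlen, ?_⟩, a, hfac, rfl⟩
      exact isFactor_suffix u hfac (List.suffix_cons a w)
  · rintro ⟨w, ⟨hlen, -⟩, a, ha, rfl⟩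
    exact ⟨by simp [hlen], ha⟩

lemma card_Ln_succ_left (n : ℕ) :
    (Ln u (n + 1)).card = ∑ w ∈ Ln u n, (LextF u w).card := by
  classical
  rw [Ln_succ_left u n, Finset.card_biUnion]
  · refine Finset.sum_congr rfl fun w _ => ?_
    exact Finset.card_image_of_injective _ (fun a b h => by simpa using h)
  · intro w hw w' hw' hne
    simp only [Finset.disjoint_left, Finset.mem_image]
    rintro v ⟨b, -, rfl⟩ ⟨b', -, h⟩
    have h2 : w' = w := by simpa using congrArg List.tail h
    exact hne h2.symm

end Count2

noncomputable section Count3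
variable {A : Type*} [Fintype A] (u : ℕ → A)

omit [Fintype A] in
lemma decomp2 {v : List A} {n : ℕ} (hlen : v.length = n + 2) :
    ∃ (a b : A) (w : List A), v = a :: (w ++ [b]) ∧ w.length = n := by
  match v with
  | a :: t =>
    have hne : t ≠ [] := by intro h; simp [h] at hlen
    refine ⟨a, t.getLast hne, t.dropLast, ?_, ?_⟩
    · rw [List.dropLast_append_getLast hne]
    · have : t.length = n + 1 := by simpa using hlen
      simp [List.length_dropLast, this]

omit [Fintype A] in
lemma midfactor {v w : List A} {a b : A} (hv : IsFactor u v)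
    (hvw : v = a :: (w ++ [b])) : IsFactor u w := by
  refine isFactor_infix u hv ⟨[a], [b], ?_⟩
  simp [hvw]

lemma Ln_succ2 (n : ℕ) [DecidableEq (List A)] :
    Ln u (n + 2) = (Ln u n).biUnion
      (fun w => (BextF u w).image (fun p => p.1 :: (w ++ [p.2]))) := by
  ext v
  simp only [mem_Ln, Finset.mem_biUnion, Finset.mem_image, mem_BextF]
  constructor
  · rintro ⟨hlen, hfac⟩
    obtain ⟨a, b, w, rfl, hwlen⟩ := decomp2 hlen
    exact ⟨w, ⟨hwlen, midfactor u hfac rfl⟩, (a, b), hfac, rfl⟩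
  · rintro ⟨w, ⟨hlen, -⟩, p, hp, rfl⟩
    exact ⟨by simp [hlen], hp⟩

lemma card_Ln_succ2 (n : ℕ) :
    (Ln u (n + 2)).card = ∑ w ∈ Ln u n, (BextF u w).card := by
  classical
  rw [Ln_succ2 u n, Finset.card_biUnion]
  · refine Finset.sum_congr rfl fun w _ => ?_
    refine Finset.card_image_of_injective _ ?_
    rintro ⟨a, b⟩ ⟨c, d⟩ h
    simp only [List.cons.injEq] at h
    obtain ⟨rfl, h2⟩ := h
    have : ([b] : List A) = [d] := List.append_cancel_left h2
    simp_all
  · intro w hw w' hw' hne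
    simp only [Finset.disjoint_left, Finset.mem_image]
    rintro v ⟨p, -, rfl⟩ ⟨q, -, h⟩
    have h2 : w' = w := by
      have := congrArg (fun l => List.dropLast (List.tail l)) h
      simpa using this
    exact hne h2.symm

lemma PalF_succ2 (n : ℕ) [DecidableEq (List A)] :
    PalF u (n + 2) = (PalF u n).biUnion (fun w => PextF u w) := by
  ext v
  simp only [mem_PalF, Finset.mem_biUnion, mem_PextF]
  constructor
  · rintro ⟨hlen, hfac, hpal⟩
    obtain ⟨a, b, w, rfl, hwlen⟩ := decomp2 hlen
    have hrev : (a :: (w ++ [b])).reverse = b :: (w.reverse ++ [a]) := by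
      simp
    rw [hrev] at hpal
    simp only [List.cons.injEq] at hpal
    obtain ⟨rfl, h2⟩ := hpal
    have hwp : w.reverse = w := List.append_cancel_right h2
    exact ⟨w, ⟨hwlen, midfactor u hfac rfl, hwp⟩, _, rfl, hfac⟩
  · rintro ⟨w, ⟨hlen, -, hwp⟩, a, rfl, hfac⟩
    refine ⟨by simp [hlen], hfac, ?_⟩
    simp [hwp]

lemma card_PalF_succ2 (n : ℕ) :
    (PalF u (n + 2)).card = ∑ w ∈ PalF u n, (PextF u w).card := by
  classical
  rw [PalF_succ2 u n, Finset.card_biUnion]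
  intro w hw w' hw' hne
  simp only [Finset.disjoint_left, mem_PextF]
  rintro v ⟨a, rfl, -⟩ ⟨b, h, -⟩
  simp only [List.cons.injEq] at h
  obtain ⟨rfl, h2⟩ := h
  exact hne (List.append_cancel_right h2)

end Count3

noncomputable section Ext
variable {A : Type*} [Fintype A] {u : ℕ → A}

lemma RextF_nonempty {w : List A} (hw : IsFactor u w) : (RextF u w).Nonempty := by
  obtain ⟨b, hb⟩ := factor_snoc u hw
  exact ⟨b, by simpa using hb⟩

lemma LextF_nonempty (hcur : ClosedUnderReversal u) {w : List A} (hw : IsFactor u w) :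
    (LextF u w).Nonempty := by
  obtain ⟨a, ha⟩ := factor_cons hcur hw
  exact ⟨a, by simpa using ha⟩

lemma bext_left {w : List A} {a b : A} (h : (a, b) ∈ BextF u w) : a ∈ LextF u w := by
  simp only [mem_BextF] at h
  simp only [mem_LextF]
  exact isFactor_prefix u h ⟨[b], by simp⟩

lemma bext_right {w : List A} {a b : A} (h : (a, b) ∈ BextF u w) : b ∈ RextF u w := by
  simp only [mem_BextF] at h
  simp only [mem_RextF]
  exact isFactor_suffix u h (by exact ⟨[a], rfl⟩)

lemma lext_bext {w : List A} {a : A} (h : a ∈ LextF u w) : ∃ b, (a, b) ∈ BextF u w := by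
  simp only [mem_LextF] at h
  obtain ⟨b, hb⟩ := factor_snoc u h
  exact ⟨b, by simpa using hb⟩

lemma rext_bext (hcur : ClosedUnderReversal u) {w : List A} {b : A}
    (h : b ∈ RextF u w) : ∃ a, (a, b) ∈ BextF u w := by
  simp only [mem_RextF] at h
  obtain ⟨a, ha⟩ := factor_cons hcur h
  exact ⟨a, by simpa [List.cons_append] using ha⟩

lemma card_bext_of_rext_singleton {w : List A} {c : A} (hr : RextF u w = {c}) :
    (BextF u w).card = (LextF u w).card := by
  classical
  have himg : BextF u w = (LextF u w).image (fun a => (a, c)) := by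
    ext ⟨a, b⟩
    simp only [Finset.mem_image]
    constructor
    · intro h
      have hb : b = c := by have := bext_right h; rw [hr] at this; simpa using this
      exact ⟨a, bext_left h, by rw [hb]⟩
    · rintro ⟨a', ha', h⟩
      obtain ⟨rfl, rfl⟩ : a' = a ∧ c = b := by simpa [Prod.ext_iff] using h
      obtain ⟨b', hb'⟩ := lext_bext ha'
      have : b' ∈ RextF u w := bext_right hb'
      rw [hr] at this
      simp only [Finset.mem_singleton] at this
      rwa [← this]
  rw [himg, Finset.card_image_of_injective _ (fun x y h => by simpa using h)]

lemma card_bext_of_lext_singleton (hcur : ClosedUnderReversal u) {w : List A} {c : A}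
    (hl : LextF u w = {c}) :
    (BextF u w).card = (RextF u w).card := by
  classical
  have himg : BextF u w = (RextF u w).image (fun b => (c, b)) := by
    ext ⟨a, b⟩
    simp only [Finset.mem_image]
    constructor
    · intro h
      have ha : a = c := by have := bext_left h; rw [hl] at this; simpa using this
      exact ⟨b, bext_right h, by rw [ha]⟩
    · rintro ⟨b', hb', h⟩
      obtain ⟨rfl, rfl⟩ : c = a ∧ b' = b := by simpa [Prod.ext_iff] using h
      obtain ⟨a', ha'⟩ := rext_bext hcur hb'
      have : a' ∈ LextF u w := bext_left ha'
      rw [hl] at this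
      simp only [Finset.mem_singleton] at this
      rwa [← this]
  rw [himg, Finset.card_image_of_injective _ (fun x y h => by simpa using h)]

lemma bext_pair {w : List A} {c : A} (hl : LextF u w = {c}) (hr : RextF u w = {c}) :
    BextF u w = {(c, c)} := by
  have hcc : (c, c) ∈ BextF u w := by
    have hx : c ∈ LextF u w := by rw [hl]; exact Finset.mem_singleton_self c
    obtain ⟨b', hb'⟩ := lext_bext hx
    have h2 : b' ∈ RextF u w := bext_right hb'
    rw [hr, Finset.mem_singleton] at h2
    rwa [h2] at hb'
  apply Finset.Subset.antisymm
  · rintro ⟨a, b⟩ h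
    have ha := bext_left h
    have hb := bext_right h
    rw [hl, Finset.mem_singleton] at ha
    rw [hr, Finset.mem_singleton] at hb
    simp [ha, hb]
  · intro p hp
    rw [Finset.mem_singleton] at hp
    rwa [hp]

lemma bilateralOrder_eq (w : List A) :
    bilateralOrder u w = ((BextF u w).card : ℤ) - (RextF u w).card
      - (LextF u w).card + 1 := by
  rw [bilateralOrder, bext_card, rext_card, lext_card]

lemma bilateralOrder_nonbisp (hcur : ClosedUnderReversal u) {w : List A}
    (hw : IsFactor u w) (hnb : ¬ Bispecial u w) : bilateralOrder u w = 0 := by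
  classical
  rw [Bispecial] at hnb
  push_neg at hnb
  rcases lt_or_ge (Set.ncard (Lext u w)) 2 with hl | hl
  · -- Lext is a singleton
    rw [lext_card] at hl
    obtain ⟨c, hc⟩ := Finset.card_eq_one.mp
      (le_antisymm (by omega) (Finset.card_pos.mpr (LextF_nonempty hcur hw)))
    rw [bilateralOrder_eq, card_bext_of_lext_singleton hcur hc, hc]
    simp
  · have hr := hnb hw hl
    rw [rext_card] at hr
    obtain ⟨c, hc⟩ := Finset.card_eq_one.mp
      (le_antisymm (by omega) (Finset.card_pos.mpr (RextF_nonempty hw)))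
    rw [bilateralOrder_eq, card_bext_of_rext_singleton hc, hc]
    simp

lemma LextF_eq_RextF_of_pal (hcur : ClosedUnderReversal u) {w : List A}
    (hpal : w.reverse = w) : LextF u w = RextF u w := by
  ext a
  simp only [mem_LextF, mem_RextF]
  constructor
  · intro h
    have := hcur _ h
    simpa [hpal] using this
  · intro h
    have := hcur _ h
    simpa [hpal] using this

lemma pext_card_nonbisp (hcur : ClosedUnderReversal u) {w : List A}
    (hw : IsFactor u w) (hpal : w.reverse = w) (hnb : ¬ Bispecial u w) :
    (PextF u w).card = 1 := by
  classical
  rw [Bispecial] at hnb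
  push_neg at hnb
  have hLR := LextF_eq_RextF_of_pal hcur hpal
  have hr1 : (RextF u w).card = 1 := by
    rcases lt_or_ge (Set.ncard (Lext u w)) 2 with hl | hl
    · rw [lext_card, hLR] at hl
      exact le_antisymm (by omega) (Finset.card_pos.mpr (RextF_nonempty hw))
    · have hr := hnb hw hl
      rw [rext_card] at hr
      exact le_antisymm (by omega) (Finset.card_pos.mpr (RextF_nonempty hw))
  obtain ⟨c, hc⟩ := Finset.card_eq_one.mp hr1
  have hB : BextF u w = {(c, c)} := bext_pair (by rw [hLR, hc]) hc
  rw [Finset.card_eq_one]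
  refine ⟨c :: (w ++ [c]), ?_⟩
  ext v
  simp only [mem_PextF, Finset.mem_singleton]
  constructor
  · rintro ⟨a, rfl, hfac⟩
    have : (a, a) ∈ BextF u w := by simpa using hfac
    rw [hB] at this
    simp only [Finset.mem_singleton, Prod.mk.injEq] at this
    rw [this.1]
  · rintro rfl
    have : (c, c) ∈ BextF u w := by rw [hB]; simp
    exact ⟨c, rfl, by simpa using this⟩

end Ext

noncomputable section Sums
variable {A : Type*} [Fintype A] {u : ℕ → A}

lemma card_Ln (hC : ∀ n : ℕ, complexity u n = (Fintype.card A - 1) * n + 1)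
    (n : ℕ) : (Ln u n).card = (Fintype.card A - 1) * n + 1 := by
  rw [← complexity_eq]; exact hC n

lemma sum_bilateral (hC : ∀ n : ℕ, complexity u n = (Fintype.card A - 1) * n + 1)
    (n : ℕ) : ∑ w ∈ Ln u n, bilateralOrder u w = 0 := by
  have h : ∑ w ∈ Ln u n, bilateralOrder u w
      = ((Ln u (n+2)).card : ℤ) - (Ln u (n+1)).card - (Ln u (n+1)).card
        + (Ln u n).card := by
    simp only [bilateralOrder_eq]
    rw [Finset.sum_add_distrib, Finset.sum_sub_distrib, Finset.sum_sub_distrib]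
    rw [← Nat.cast_sum, ← Nat.cast_sum, ← Nat.cast_sum]
    rw [← card_Ln_succ2 u n, ← card_Ln_succ_right u n, ← card_Ln_succ_left u n]
    simp
  rw [h]
  simp only [card_Ln hC]
  push_cast
  ring

open Classical in
lemma sum_bilateral_bisp (hcur : ClosedUnderReversal u)
    (hC : ∀ n : ℕ, complexity u n = (Fintype.card A - 1) * n + 1)
    (n : ℕ) :
    ∑ w ∈ (Ln u n).filter (Bispecial u), bilateralOrder u w = 0 := by
  rw [← sum_bilateral hC n]
  apply Finset.sum_filter_of_ne
  intro w hw hbw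
  by_contra hnb
  exact hbw (bilateralOrder_nonbisp hcur (((mem_Ln u).mp hw)).2 hnb)

lemma palF_zero : PalF u 0 = {([] : List A)} := by
  ext w
  simp only [mem_PalF, Finset.mem_singleton]
  constructor
  · rintro ⟨hlen, -, -⟩; exact List.length_eq_zero_iff.mp hlen
  · rintro rfl
    exact ⟨rfl, ⟨0, by simp [OccursAt, word]⟩, rfl⟩

open Classical in
lemma palF_one (hall : AllLettersOccur u) :
    PalF u 1 = Finset.univ.image (fun a : A => [a]) := by
  ext w
  simp only [mem_PalF, Finset.mem_image, Finset.mem_univ, true_and]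
  constructor
  · rintro ⟨hlen, -, -⟩
    obtain ⟨a, rfl⟩ := List.length_eq_one_iff.mp hlen
    exact ⟨a, rfl⟩
  · rintro ⟨a, rfl⟩
    obtain ⟨i, hi⟩ := hall a
    refine ⟨rfl, ⟨i, ?_⟩, rfl⟩
    simp [OccursAt, word, List.range_succ, hi]

lemma palComplexity_zero : palComplexity u 0 = 1 := by
  rw [palComplexity_eq, palF_zero]; rfl

lemma palComplexity_one (hall : AllLettersOccur u) :
    palComplexity u 1 = Fintype.card A := by
  classical
  rw [palComplexity_eq, palF_one hall,
    Finset.card_image_of_injective _ (fun x y h => by simpa using h)]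
  simp

end Sums

noncomputable section Back
variable {A : Type*} [Fintype A] {u : ℕ → A}

open Classical in
lemma step_back (hcur : ClosedUnderReversal u)
    (hC : ∀ n : ℕ, complexity u n = (Fintype.card A - 1) * n + 1)
    (H : ∀ w : List A, Bispecial u w →
        (w.reverse ≠ w → bilateralOrder u w = 0) ∧
        (w.reverse = w → bilateralOrder u w = (Set.ncard (Pext u w) : ℤ) - 1))
    (n : ℕ) : ((PalF u (n + 2)).card : ℤ) = (PalF u n).card := by
  have h1 : ((PalF u (n+2)).card : ℤ) = ∑ w ∈ PalF u n, ((PextF u w).card : ℤ) := by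
    rw [card_PalF_succ2]; push_cast; rfl
  have h3 : ∑ w ∈ PalF u n, (((PextF u w).card : ℤ) - 1)
      = ∑ w ∈ (PalF u n).filter (Bispecial u), (((PextF u w).card : ℤ) - 1) := by
    symm; apply Finset.sum_filter_of_ne
    intro w hw hne
    by_contra hnb
    rw [pext_card_nonbisp hcur ((mem_PalF u).mp hw).2.1 ((mem_PalF u).mp hw).2.2 hnb] at hne
    simp at hne
  have h4 : ∑ w ∈ (PalF u n).filter (Bispecial u), (((PextF u w).card : ℤ) - 1)
      = ∑ w ∈ (PalF u n).filter (Bispecial u), bilateralOrder u w := by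
    refine Finset.sum_congr rfl fun w hw => ?_
    rw [Finset.mem_filter] at hw
    rw [(H w hw.2).2 ((mem_PalF u).mp hw.1).2.2, pext_card]
  have h5 : (PalF u n).filter (Bispecial u)
      = ((Ln u n).filter (Bispecial u)).filter (fun w => w.reverse = w) := by
    ext w
    simp only [Finset.mem_filter, mem_PalF, mem_Ln]
    tauto
  have h7 := sum_bilateral_bisp hcur hC n
  rw [← Finset.sum_filter_add_sum_filter_not ((Ln u n).filter (Bispecial u))
    (fun w => w.reverse = w)] at h7
  have h8 : ∑ w ∈ ((Ln u n).filter (Bispecial u)).filter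
      (fun w => ¬ w.reverse = w), bilateralOrder u w = 0 := by
    apply Finset.sum_eq_zero
    intro w hw
    simp only [Finset.mem_filter] at hw
    exact (H w hw.1.2).1 hw.2
  rw [h8, add_zero] at h7
  have h2 : ∑ w ∈ PalF u n, ((PextF u w).card : ℤ)
      = (PalF u n).card + ∑ w ∈ PalF u n, (((PextF u w).card : ℤ) - 1) := by
    rw [Finset.sum_sub_distrib]
    simp
  rw [h1, h2, h3, h4, h5, h7, add_zero]

lemma backward_dir (hall : AllLettersOccur u) (hcur : ClosedUnderReversal u)
    (hC : ∀ n : ℕ, complexity u n = (Fintype.card A - 1) * n + 1)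
    (H : ∀ w : List A, Bispecial u w →
        (w.reverse ≠ w → bilateralOrder u w = 0) ∧
        (w.reverse = w → bilateralOrder u w = (Set.ncard (Pext u w) : ℤ) - 1)) :
    ∀ n : ℕ, palComplexity u n + palComplexity u (n + 1) = Fintype.card A + 1 := by
  intro n
  induction n with
  | zero =>
    rw [palComplexity_zero, palComplexity_one hall, add_comm]
  | succ m ih =>
    have hstep : palComplexity u (m + 2) = palComplexity u m := by
      rw [palComplexity_eq, palComplexity_eq]
      exact_mod_cast step_back hcur hC H m
    rw [show m + 1 + 1 = m + 2 from rfl, hstep, add_comm]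
    exact ih

end Back

section Graph
variable {α β : Type*} [DecidableEq α] [DecidableEq β]

def GWF (V : Finset α) (E : Finset β) (ep : β → α × α) : Prop :=
  ∀ b ∈ E, (ep b).1 ∈ V ∧ (ep b).2 ∈ V

def GConn (V : Finset α) (E : Finset β) (ep : β → α × α) : Prop :=
  ∀ S ⊆ V, S.Nonempty → S ≠ V → ∃ b ∈ E,
    ((ep b).1 ∈ S ∧ (ep b).2 ∉ S) ∨ ((ep b).2 ∈ S ∧ (ep b).1 ∉ S)

lemma gconn_card_aux : ∀ (n : ℕ) (V : Finset α) (E : Finset β) (ep : β → α × α),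
    V.card = n → GWF V E ep → GConn V E ep → V.Nonempty → V.card ≤ E.card + 1 := by
  intro n
  induction n using Nat.strong_induction_on with
  | _ n IH =>
    intro V E ep hcard hwf hconn hne
    rcases Nat.lt_or_ge n 2 with h2 | h2
    · omega
    · obtain ⟨v, hv⟩ := hne
      have hSne : ({v} : Finset α).Nonempty := Finset.singleton_nonempty v
      have hSV : ({v} : Finset α) ≠ V := by
        intro h
        rw [← h] at hcard
        simp at hcard
        omega
      obtain ⟨b₀, hb₀E, hb₀⟩ := hconn {v} (Finset.singleton_subset_iff.mpr hv) hSne hSV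
      -- x : the other endpoint of b₀
      obtain ⟨x, hxV, hxne, hb₀ep⟩ :
          ∃ x, x ∈ V ∧ x ≠ v ∧ ((ep b₀).1 = v ∧ (ep b₀).2 = x ∨ (ep b₀).1 = x ∧ (ep b₀).2 = v) := by
        rcases hb₀ with ⟨h1, h2⟩ | ⟨h1, h2⟩
        · refine ⟨(ep b₀).2, (hwf b₀ hb₀E).2, ?_, Or.inl ⟨by simpa using h1, rfl⟩⟩
          intro h; rw [h] at h2; simp at h2
        · refine ⟨(ep b₀).1, (hwf b₀ hb₀E).1, ?_, Or.inr ⟨rfl, by simpa using h1⟩⟩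
          intro h; rw [h] at h2; simp at h2
      set m : α → α := fun y => if y = v then x else y with hm
      set V' := V.erase v with hV'
      set E' := E.erase b₀ with hE'
      set ep' : β → α × α := fun b => (m (ep b).1, m (ep b).2) with hep'
      have hmV : ∀ y ∈ V, m y ∈ V' := by
        intro y hy
        by_cases h : y = v
        · simp [hm, h, hV', Finset.mem_erase, hxne, hxV]
        · simp [hm, h, hV', Finset.mem_erase, hy]
      have hwf' : GWF V' E' ep' := by
        intro b hb
        have hbE : b ∈ E := Finset.mem_of_mem_erase hb
        exact ⟨hmV _ (hwf b hbE).1, hmV _ (hwf b hbE).2⟩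
      have hconn' : GConn V' E' ep' := by
        intro S' hS'sub hS'ne hS'neV
        set S := if x ∈ S' then insert v S' else S' with hS
        have hsides : ∀ y ∈ V, (y ∈ S ↔ m y ∈ S') := by
          intro y hy
          by_cases hyv : y = v
          · subst hyv
            by_cases hx : x ∈ S' <;> simp [hS, hm, hx]
            intro h
            exact absurd (hS'sub h) (by simp [hV'])
          · by_cases hx : x ∈ S' <;> simp [hS, hm, hx, hyv]
        have hSsub : S ⊆ V := by
          intro y hy
          by_cases hx : x ∈ S' <;> simp [hS, hx] at hy
          · rcases hy with rfl | hy
            · exact hv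
            · exact Finset.mem_of_mem_erase (hS'sub hy)
          · exact Finset.mem_of_mem_erase (hS'sub hy)
        have hSne2 : S.Nonempty := by
          obtain ⟨c, hc⟩ := hS'ne
          by_cases hx : x ∈ S'
          · exact ⟨v, by simp [hS, hx]⟩
          · exact ⟨c, by simp [hS, hx, hc]⟩
        have hSneV : S ≠ V := by
          obtain ⟨z, hzV', hzS'⟩ := Finset.exists_of_ssubset (hS'sub.ssubset_of_ne hS'neV)
          intro hSV2
          have hzV : z ∈ V := Finset.mem_of_mem_erase hzV'
          have : z ∈ S := hSV2 ▸ hzV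
          rw [hsides z hzV] at this
          have hzv : z ≠ v := by rw [hV'] at hzV'; exact (Finset.mem_erase.mp hzV').1
          rw [hm] at this
          simp [hzv] at this
          exact hzS' this
        obtain ⟨b, hbE, hbcross⟩ := hconn S hSsub hSne2 hSneV
        have hbne : b ≠ b₀ := by
          intro h
          have hvx : (v ∈ S ↔ x ∈ S) := by
            rw [hsides v hv, hsides x hxV]
            rw [hm]; simp [hxne]
          rcases hb₀ep with ⟨h1, h2⟩ | ⟨h1, h2⟩ <;>
            rcases hbcross with ⟨c1, c2⟩ | ⟨c1, c2⟩ <;>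
              simp only [h, h1, h2] at c1 c2 <;> tauto
        refine ⟨b, Finset.mem_erase.mpr ⟨hbne, hbE⟩, ?_⟩
        have e1 := hsides (ep b).1 (hwf b hbE).1
        have e2 := hsides (ep b).2 (hwf b hbE).2
        rcases hbcross with ⟨c1, c2⟩ | ⟨c1, c2⟩
        · exact Or.inl ⟨(e1.mp c1 : _), fun h => c2 (e2.mpr h)⟩
        · exact Or.inr ⟨(e2.mp c1 : _), fun h => c2 (e1.mpr h)⟩
      have hV'ne : V'.Nonempty := by
        refine ⟨x, ?_⟩
        rw [hV', Finset.mem_erase]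
        exact ⟨hxne, hxV⟩
      have hV'card : V'.card = n - 1 := by
        rw [hV', Finset.card_erase_of_mem hv, hcard]
      have := IH (n - 1) (by omega) V' E' ep' hV'card hwf' hconn' hV'ne
      have hE'card : E'.card = E.card - 1 := Finset.card_erase_of_mem hb₀E
      have hEpos : 1 ≤ E.card := Finset.card_pos.mpr ⟨b₀, hb₀E⟩
      omega

lemma gconn_card (V : Finset α) (E : Finset β) (ep : β → α × α)
    (hwf : GWF V E ep) (hconn : GConn V E ep) (hne : V.Nonempty) :
    V.card ≤ E.card + 1 :=
  gconn_card_aux V.card V E ep rfl hwf hconn hne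

lemma tree_subset_bound (V : Finset α) (E : Finset β) (ep : β → α × α)
    (hwf : GWF V E ep) (hconn : GConn V E ep) (hVne : V.Nonempty)
    (htree : E.card + 1 ≤ V.card)
    (F : Finset β) (hFE : F ⊆ E)
    (hFnl : ∀ b ∈ F, (ep b).1 ≠ (ep b).2) (hFne : F.Nonempty) :
    F.card + 1 ≤ (F.biUnion (fun b => {(ep b).1, (ep b).2})).card := by
  classical
  set W := F.biUnion (fun b => {(ep b).1, (ep b).2}) with hW
  have hWV : W ⊆ V := by
    intro y hy
    rw [hW, Finset.mem_biUnion] at hy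
    obtain ⟨b, hbF, hyb⟩ := hy
    have := hwf b (hFE hbF)
    simp only [Finset.mem_insert, Finset.mem_singleton] at hyb
    rcases hyb with rfl | rfl
    · exact this.1
    · exact this.2
  obtain ⟨b₁, hb₁⟩ := hFne
  have hWne : W.Nonempty := ⟨(ep b₁).1, by rw [hW]; exact Finset.mem_biUnion.mpr ⟨b₁, hb₁, by simp⟩⟩
  obtain ⟨w0, hw0⟩ := hWne
  set m : α → α := fun y => if y ∈ W then w0 else y with hm
  set V' := V.image m with hV'
  set E' := E \ F with hE'
  set ep' : β → α × α := fun b => (m (ep b).1, m (ep b).2) with hep'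
  have hwf' : GWF V' E' ep' := by
    intro b hb
    have hbE : b ∈ E := (Finset.mem_sdiff.mp hb).1
    exact ⟨Finset.mem_image_of_mem m (hwf b hbE).1,
      Finset.mem_image_of_mem m (hwf b hbE).2⟩
  have hWside : ∀ y, y ∈ W → m y = w0 := by intro y hy; simp [hm, hy]
  have hconn' : GConn V' E' ep' := by
    intro S' hS'sub hS'ne hS'neV
    set S := V.filter (fun y => m y ∈ S') with hS
    have hsides : ∀ y ∈ V, (y ∈ S ↔ m y ∈ S') := by
      intro y hy; simp [hS, hy]
    have hSsub : S ⊆ V := Finset.filter_subset _ _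
    have hSne2 : S.Nonempty := by
      obtain ⟨c, hc⟩ := hS'ne
      have : c ∈ V' := hS'sub hc
      rw [hV', Finset.mem_image] at this
      obtain ⟨y, hyV, rfl⟩ := this
      exact ⟨y, (hsides y hyV).mpr hc⟩
    have hSneV : S ≠ V := by
      obtain ⟨c, hcV', hcS'⟩ := Finset.exists_of_ssubset (hS'sub.ssubset_of_ne hS'neV)
      rw [hV', Finset.mem_image] at hcV'
      obtain ⟨y, hyV, rfl⟩ := hcV'
      intro hSV2
      have : y ∈ S := hSV2 ▸ hyV
      exact hcS' ((hsides y hyV).mp this)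
    obtain ⟨b, hbE, hbcross⟩ := hconn S hSsub hSne2 hSneV
    have hbF : b ∉ F := by
      intro hbF
      have h1 : (ep b).1 ∈ W := Finset.mem_biUnion.mpr ⟨b, hbF, by simp⟩
      have h2 : (ep b).2 ∈ W := Finset.mem_biUnion.mpr ⟨b, hbF, by simp⟩
      have e1 := hsides (ep b).1 (hWV h1)
      have e2 := hsides (ep b).2 (hWV h2)
      rw [hWside _ h1] at e1
      rw [hWside _ h2] at e2
      rcases hbcross with ⟨c1, c2⟩ | ⟨c1, c2⟩
      · exact c2 (e2.mpr (e1.mp c1))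
      · exact c2 (e1.mpr (e2.mp c1))
    refine ⟨b, Finset.mem_sdiff.mpr ⟨hbE, hbF⟩, ?_⟩
    have e1 := hsides (ep b).1 (hwf b hbE).1
    have e2 := hsides (ep b).2 (hwf b hbE).2
    rcases hbcross with ⟨c1, c2⟩ | ⟨c1, c2⟩
    · exact Or.inl ⟨e1.mp c1, fun h => c2 (e2.mpr h)⟩
    · exact Or.inr ⟨e2.mp c1, fun h => c2 (e1.mpr h)⟩
  have hV'ne : V'.Nonempty := ⟨m w0, Finset.mem_image_of_mem m (hWV hw0)⟩
  have hmain := gconn_card V' E' ep' hwf' hconn' hV'ne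
  -- V'.card ≥ V.card - W.card + 1
  have hsub : (V \ W) ∪ {w0} ⊆ V' := by
    intro y hy
    rw [Finset.mem_union] at hy
    rcases hy with hy | hy
    · rw [Finset.mem_sdiff] at hy
      rw [hV', Finset.mem_image]
      exact ⟨y, hy.1, by simp [hm, hy.2]⟩
    · rw [Finset.mem_singleton] at hy
      rw [hy, hV', Finset.mem_image]
      exact ⟨w0, hWV hw0, hWside _ hw0⟩
  have hdisj : Disjoint (V \ W) ({w0} : Finset α) := by
    rw [Finset.disjoint_singleton_right, Finset.mem_sdiff]
    tauto
  have hcard1 : (V \ W).card + 1 ≤ V'.card := by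
    have := Finset.card_le_card hsub
    rwa [Finset.card_union_of_disjoint hdisj, Finset.card_singleton] at this
  have hcard2 : (V \ W).card = V.card - W.card := by
    rw [Finset.card_sdiff_of_subset hWV]
  have hcard3 : E'.card = E.card - F.card := by
    rw [hE', Finset.card_sdiff_of_subset hFE]
  have hWc : W.card ≤ V.card := Finset.card_le_card hWV
  have hFc : F.card ≤ E.card := Finset.card_le_card hFE
  omega

end Graph

section Recur
variable {A : Type*} (u : ℕ → A)

lemma word_dropLast (i N : ℕ) : (word u i (N + 1)).dropLast = word u i N := by
  rw [word_append u i N 1]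
  simp [word, List.range_succ]

lemma word_tail (i N : ℕ) : (word u i (N + 1)).tail = word u (i + 1) N := by
  simp only [word, List.range_succ_eq_map, List.map_cons, List.tail_cons,
    List.map_map, Function.comp_def]
  apply List.map_congr_left
  intro j _
  congr 1
  omega

lemma occursAt_decomp {w s v t : List A} {i : ℕ} (hi : OccursAt u w i)
    (hst : w = s ++ v ++ t) : OccursAt u v (i + s.length) := by
  have hw' : w = word u i w.length := hi
  have hlen : w.length = s.length + (v.length + t.length) := by
    rw [hst]; simp [add_assoc]
  rw [hlen, word_append, word_append] at hw'
  rw [hst, List.append_assoc] at hw'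
  have h1 := (List.append_inj hw' (by simp [word_length])).2
  exact (List.append_inj h1 (by simp [word_length])).1

variable {u} in
lemma occurs_reverse_ge (hcur : ClosedUnderReversal u) {y : List A}
    (hy : IsFactor u y) (M : ℕ) : ∃ j, M ≤ j ∧ OccursAt u y.reverse j := by
  obtain ⟨i₀, hi₀⟩ := hy
  have h0 : y = word u i₀ y.length := hi₀
  have hp : word u 0 (i₀ + (y.length + M))
      = word u 0 i₀ ++ (y ++ word u (i₀ + y.length) M) := by
    have e1 := word_append u 0 i₀ (y.length + M)
    simp only [Nat.zero_add] at e1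
    rw [e1, word_append u i₀ y.length M, ← h0]
  obtain ⟨j, hj⟩ := hcur _ (isFactor_word u 0 (i₀ + (y.length + M)))
  have hdecomp : (word u 0 (i₀ + (y.length + M))).reverse
      = (word u (i₀ + y.length) M).reverse ++ y.reverse ++ (word u 0 i₀).reverse := by
    rw [hp]
    simp [List.reverse_append, List.append_assoc]
  have := occursAt_decomp u hj hdecomp
  refine ⟨j + (word u (i₀ + y.length) M).reverse.length, ?_, this⟩
  simp [word_length]

variable {u} in
lemma occurs_ge (hcur : ClosedUnderReversal u) {y : List A}
    (hy : IsFactor u y) (M : ℕ) : ∃ j, M ≤ j ∧ OccursAt u y j := by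
  have hyr : IsFactor u y.reverse := hcur y hy
  obtain ⟨j, hjM, hj⟩ := occurs_reverse_ge hcur hyr M
  rw [List.reverse_reverse] at hj
  exact ⟨j, hjM, hj⟩

lemma nat_ivt {f : ℕ → Prop} {i j : ℕ} (hi : f i) (hj : ¬ f j) (hij : i ≤ j) :
    ∃ t, f t ∧ ¬ f (t + 1) := by
  by_contra h
  push_neg at h
  have hall : ∀ d, f (i + d) := by
    intro d
    induction d with
    | zero => simpa using hi
    | succ m ih => exact (by rw [show i + (m+1) = (i + m) + 1 by omega]; exact h _ ih)
  exact hj (by have := hall (j - i); rwa [show i + (j - i) = j by omega] at this)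

end Recur

noncomputable section Quot
variable {A : Type*} [Fintype A] [DecidableEq A] (u : ℕ → A)

def cls (v : List A) : Finset (List A) := {v, v.reverse}

omit [Fintype A] in
@[simp] lemma mem_cls {x v : List A} : x ∈ cls v ↔ x = v ∨ x = v.reverse := by
  simp [cls]

omit [Fintype A] in
lemma cls_reverse (v : List A) : cls v.reverse = cls v := by
  rw [cls, cls, List.reverse_reverse, Finset.pair_comm]

omit [Fintype A] in
lemma cls_eq_iff {x v : List A} : cls x = cls v ↔ x = v ∨ x = v.reverse := by
  constructor
  · intro h
    have : x ∈ cls v := h ▸ (by simp : x ∈ cls x)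
    simpa using this
  · rintro (rfl | rfl)
    · rfl
    · exact cls_reverse v

def pick (c : Finset (List A)) : List A := if h : c.Nonempty then h.choose else []

omit [Fintype A] in
lemma pick_cls (v : List A) : pick (cls v) = v ∨ pick (cls v) = v.reverse := by
  have hne : (cls v).Nonempty := ⟨v, by simp⟩
  have : pick (cls v) ∈ cls v := by
    rw [pick, dif_pos hne]; exact hne.choose_spec
  simpa using this

def Loopy (v : List A) : Prop := v.tail = v.dropLast ∨ v.tail = v.dropLast.reverse

omit [Fintype A] in
instance loopyDec : DecidablePred (Loopy : List A → Prop) := fun v =>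
  inferInstanceAs (Decidable (v.tail = v.dropLast ∨ v.tail = v.dropLast.reverse))

omit [Fintype A] [DecidableEq A] in
lemma dropLast_reverse' (v : List A) : v.reverse.dropLast = v.tail.reverse := by
  have := List.tail_reverse (l := v.reverse)
  rw [List.reverse_reverse] at this
  rw [← List.reverse_reverse (v.reverse.dropLast), ← this]

omit [Fintype A] [DecidableEq A] in
lemma tail_reverse' (v : List A) : v.reverse.tail = v.dropLast.reverse :=
  List.tail_reverse (l := v)

omit [Fintype A] [DecidableEq A] in
lemma loopy_reverse {v : List A} (h : Loopy v.reverse) : Loopy v := by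
  rw [Loopy, tail_reverse', dropLast_reverse'] at h
  rcases h with h | h
  · have h2 : v.dropLast = v.tail := by simpa using congrArg List.reverse h
    exact Or.inl h2.symm
  · rw [List.reverse_reverse] at h
    exact Or.inr h.symm

omit [Fintype A] [DecidableEq A] in
lemma pal_loopy {v : List A} (h : v.reverse = v) : Loopy v := by
  right
  conv_lhs => rw [← h]
  exact tail_reverse' v

def VqF (N : ℕ) : Finset (Finset (List A)) := (Ln u N).image cls

def EnlF (N : ℕ) : Finset (Finset (List A)) :=
  ((Ln u (N + 1)).filter (fun v => ¬ Loopy v)).image cls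

def LpF (N : ℕ) : Finset (Finset (List A)) :=
  ((Ln u (N + 1)).filter (fun v => Loopy v)).image cls

lemma cls_mem_VqF {v : List A} {N : ℕ} (hv : v ∈ Ln u N) : cls v ∈ VqF u N :=
  Finset.mem_image_of_mem cls hv

lemma mem_EnlF {c : Finset (List A)} {N : ℕ} :
    c ∈ EnlF u N ↔ ∃ v ∈ Ln u (N+1), ¬ Loopy v ∧ cls v = c := by
  rw [EnlF]
  simp only [Finset.mem_image, Finset.mem_filter]
  tauto

def epq : Finset (List A) → Finset (List A) × Finset (List A) :=
  fun c => (cls ((pick c).dropLast), cls ((pick c).tail))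

omit [Fintype A] in
lemma epq_cls (v : List A) :
    epq (cls v) = (cls v.dropLast, cls v.tail) ∨
    epq (cls v) = (cls v.tail, cls v.dropLast) := by
  rcases pick_cls v with h | h
  · left; rw [epq, h]
  · right; rw [epq, h, dropLast_reverse', tail_reverse', cls_reverse, cls_reverse]

lemma wf_quot (N : ℕ) : GWF (VqF u N) (EnlF u N) epq := by
  intro c hc
  obtain ⟨v, hv, -, rfl⟩ := (mem_EnlF u).mp hc
  obtain ⟨hlen, hfac⟩ := (mem_Ln u).mp hv
  have h1 : v.dropLast ∈ Ln u N := by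
    rw [mem_Ln]
    exact ⟨by simp [hlen], isFactor_prefix u hfac (List.dropLast_prefix v)⟩
  have h2 : v.tail ∈ Ln u N := by
    rw [mem_Ln]
    exact ⟨by simp [hlen], isFactor_suffix u hfac (List.tail_suffix v)⟩
  rcases epq_cls v with h | h <;> rw [h]
  · exact ⟨cls_mem_VqF u h1, cls_mem_VqF u h2⟩
  · exact ⟨cls_mem_VqF u h2, cls_mem_VqF u h1⟩

variable {u} in
lemma conn_quot (hcur : ClosedUnderReversal u) (N : ℕ) :
    GConn (VqF u N) (EnlF u N) epq := by
  intro S hsub hne hneV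
  obtain ⟨c, hcS⟩ := hne
  have hcV := hsub hcS
  rw [VqF, Finset.mem_image] at hcV
  obtain ⟨x, hx, hcx⟩ := hcV
  obtain ⟨c', hc'V, hc'S⟩ : ∃ c', c' ∈ VqF u N ∧ c' ∉ S := by
    by_contra h
    push_neg at h
    exact hneV (Finset.Subset.antisymm hsub h)
  rw [VqF, Finset.mem_image] at hc'V
  obtain ⟨y, hy, hc'y⟩ := hc'V
  obtain ⟨i, hi⟩ := ((mem_Ln u).mp hx).2
  obtain ⟨j, hij, hj⟩ := occurs_ge hcur ((mem_Ln u).mp hy).2 i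
  have hfi : cls (word u i N) ∈ S := by
    have : x = word u i N := by
      have := hi
      rwa [OccursAt, ((mem_Ln u).mp hx).1] at this
    rwa [← this, hcx]
  have hfj : cls (word u j N) ∉ S := by
    have : y = word u j N := by
      have := hj
      rwa [OccursAt, ((mem_Ln u).mp hy).1] at this
    rwa [← this, hc'y]
  obtain ⟨t, hft, hft1⟩ := nat_ivt (f := fun t => cls (word u t N) ∈ S) hfi hfj hij
  set v := word u t (N + 1) with hv
  have hdl : v.dropLast = word u t N := word_dropLast u t N
  have htl : v.tail = word u (t + 1) N := word_tail u t N
  have hnl : ¬ Loopy v := by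
    intro hL
    have : cls v.tail = cls v.dropLast := by
      rcases hL with h | h
      · rw [h]
      · rw [h, cls_reverse]
    rw [hdl, htl] at this
    exact hft1 (this ▸ hft)
  have hvmem : cls v ∈ EnlF u N := by
    refine (mem_EnlF u).mpr ⟨v, ?_, hnl, rfl⟩
    rw [mem_Ln]
    exact ⟨word_length u t (N + 1), isFactor_word u t (N + 1)⟩
  refine ⟨cls v, hvmem, ?_⟩
  rcases epq_cls v with h | h <;> rw [h]
  · exact Or.inl ⟨by rwa [hdl], by rwa [htl]⟩
  · exact Or.inr ⟨by rwa [hdl], by rwa [htl]⟩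

omit [Fintype A] in
lemma cls_count (T : Finset (List A)) (hT : ∀ v ∈ T, v.reverse ∈ T) :
    T.card + (T.filter (fun v => v.reverse = v)).card = 2 * (T.image cls).card := by
  have h1 : T.card = ∑ c ∈ T.image cls, (T.filter (fun v => cls v = c)).card :=
    Finset.card_eq_sum_card_image cls T
  have h2 : (T.filter (fun v => v.reverse = v)).card
      = ∑ c ∈ T.image cls, ((T.filter (fun v => v.reverse = v)).filter
          (fun v => cls v = c)).card := by
    apply Finset.card_eq_sum_card_fiberwise
    intro x hx
    exact Finset.mem_image_of_mem cls (Finset.mem_filter.mp hx).1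
  have h3 : 2 * (T.image cls).card = ∑ _c ∈ T.image cls, 2 := by
    rw [Finset.sum_const, smul_eq_mul, Nat.mul_comm]
  rw [h1, h2, ← Finset.sum_add_distrib, h3]
  apply Finset.sum_congr rfl
  intro c hc
  rw [Finset.mem_image] at hc
  obtain ⟨v₀, hv₀, rfl⟩ := hc
  have hfib : T.filter (fun v => cls v = cls v₀) = {v₀, v₀.reverse} := by
    ext x
    simp only [Finset.mem_filter, Finset.mem_insert, Finset.mem_singleton]
    constructor
    · rintro ⟨-, h⟩
      exact cls_eq_iff.mp h
    · rintro (rfl | rfl)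
      · exact ⟨hv₀, rfl⟩
      · exact ⟨hT _ hv₀, cls_reverse v₀⟩
  by_cases hp : v₀.reverse = v₀
  · have hfib1 : T.filter (fun v => cls v = cls v₀) = {v₀} := by
      rw [hfib, hp]
      simp
    have hpal1 : (T.filter (fun v => v.reverse = v)).filter (fun v => cls v = cls v₀)
        = {v₀} := by
      ext x
      simp only [Finset.mem_filter, Finset.mem_singleton]
      constructor
      · rintro ⟨-, hcl⟩
        rcases cls_eq_iff.mp hcl with rfl | rfl
        · rfl
        · exact hp
      · rintro rfl
        exact ⟨⟨hv₀, hp⟩, rfl⟩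
    rw [hfib1, hpal1]
    simp
  · have hpal0 : (T.filter (fun v => v.reverse = v)).filter (fun v => cls v = cls v₀)
        = ∅ := by
      rw [Finset.eq_empty_iff_forall_notMem]
      intro x hx
      rw [Finset.mem_filter, Finset.mem_filter] at hx
      obtain ⟨⟨-, hxp⟩, hcl⟩ := hx
      rcases cls_eq_iff.mp hcl with rfl | rfl
      · exact hp hxp
      · rw [List.reverse_reverse] at hxp
        exact hp hxp.symm
    have hcard2 : (T.filter (fun v => cls v = cls v₀)).card = 2 := by
      rw [hfib, Finset.card_insert_of_notMem (by simp; exact fun h => hp h.symm),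
        Finset.card_singleton]
    rw [hcard2, hpal0]
    simp

variable {u} in
lemma enl_card (hall : AllLettersOccur u) (hcur : ClosedUnderReversal u)
    (hC : ∀ n : ℕ, complexity u n = (Fintype.card A - 1) * n + 1)
    (hP : ∀ n : ℕ, palComplexity u n + palComplexity u (n + 1) = Fintype.card A + 1)
    (N : ℕ) : (EnlF u N).card + 1 = (VqF u N).card := by
  have hk : 1 ≤ Fintype.card A := Fintype.card_pos_iff.mpr ⟨u 0⟩
  set m := Fintype.card A - 1 with hm
  have hLnclosed : ∀ M : ℕ, ∀ v ∈ Ln u M, v.reverse ∈ Ln u M := by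
    intro M v hv
    rw [mem_Ln] at hv ⊢
    exact ⟨by simp [hv.1], hcur v hv.2⟩
  have hpalfilter : ∀ M : ℕ, (Ln u M).filter (fun v => v.reverse = v) = PalF u M := by
    intro M
    ext v
    simp only [Finset.mem_filter, mem_Ln, mem_PalF]
    tauto
  have a1 : (Ln u N).card + (PalF u N).card = 2 * (VqF u N).card := by
    rw [← hpalfilter N]
    exact cls_count (Ln u N) (hLnclosed N)
  have a2 : (Ln u (N+1)).card + (PalF u (N+1)).card
      = 2 * ((Ln u (N+1)).image cls).card := by
    rw [← hpalfilter (N+1)]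
    exact cls_count (Ln u (N+1)) (hLnclosed (N+1))
  have a3 : (Ln u (N+1)).image cls = EnlF u N ∪ LpF u N := by
    ext c
    rw [Finset.mem_union, EnlF, LpF]
    simp only [Finset.mem_image, Finset.mem_filter]
    constructor
    · rintro ⟨v, hv, rfl⟩
      by_cases hL : Loopy v
      · exact Or.inr ⟨v, ⟨hv, hL⟩, rfl⟩
      · exact Or.inl ⟨v, ⟨hv, hL⟩, rfl⟩
    · rintro (⟨v, ⟨hv, -⟩, rfl⟩ | ⟨v, ⟨hv, -⟩, rfl⟩) <;> exact ⟨v, hv, rfl⟩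
  have a3d : Disjoint (EnlF u N) (LpF u N) := by
    rw [Finset.disjoint_left]
    intro c hc1 hc2
    obtain ⟨v, hv, hnl, rfl⟩ := (mem_EnlF u).mp hc1
    rw [LpF, Finset.mem_image] at hc2
    obtain ⟨v', hv', hvv⟩ := hc2
    rw [Finset.mem_filter] at hv'
    rcases cls_eq_iff.mp hvv with rfl | rfl
    · exact hnl hv'.2
    · exact hnl (loopy_reverse hv'.2)
  have a4 : (PalF u (N+1)).card ≤ (LpF u N).card := by
    apply Finset.card_le_card_of_injOn cls
    · intro v hv
      rw [Finset.mem_coe, mem_PalF] at hv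
      rw [Finset.mem_coe, LpF, Finset.mem_image]
      exact ⟨v, Finset.mem_filter.mpr ⟨(mem_Ln u).mpr ⟨hv.1, hv.2.1⟩, pal_loopy hv.2.2⟩, rfl⟩
    · intro v hv v' hv' hcl
      rw [Finset.mem_coe, mem_PalF] at hv hv'
      rcases cls_eq_iff.mp hcl with h | h
      · exact h
      · rw [hv'.2.2] at h
        exact h
  have a5 : (VqF u N).card ≤ (EnlF u N).card + 1 := by
    apply gconn_card _ _ _ (wf_quot u N) (conn_quot hcur N)
    exact ⟨cls (word u 0 N), Finset.mem_image_of_mem cls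
      ((mem_Ln u).mpr ⟨word_length u 0 N, isFactor_word u 0 N⟩)⟩
  have a6 : (Ln u (N+1)).card = (Ln u N).card + m := by
    rw [card_Ln hC, card_Ln hC]
    ring
  have a7 : (PalF u N).card + (PalF u (N+1)).card = m + 2 := by
    have := hP N
    rw [palComplexity_eq, palComplexity_eq] at this
    omega
  have a8 := Finset.card_union_of_disjoint a3d
  rw [a3] at a2
  omega

end Quot

section Shift
variable {A : Type*}

lemma shift_eq : ∀ (w : List A) (a b : A), w ++ [b] = a :: w →
    w = List.replicate w.length a ∧ b = a := by
  intro w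
  induction w with
  | nil =>
    intro a b h
    simp at h
    simp [h]
  | cons c t ih =>
    intro a b h
    simp only [List.cons_append, List.cons.injEq] at h
    obtain ⟨h1, h2⟩ := h
    subst h1
    obtain ⟨ih1, ih2⟩ := ih c b h2
    refine ⟨?_, ih2⟩
    rw [List.length_cons, List.replicate_succ]
    exact congrArg _ ih1

lemma rev_ext (a b : A) (w : List A) :
    (a :: (w ++ [b])).reverse = b :: (w.reverse ++ [a]) := by
  simp

lemma tail_ext (a b : A) (w : List A) : (a :: (w ++ [b])).tail = w ++ [b] := rfl

lemma dropLast_ext (a b : A) (w : List A) :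
    (a :: (w ++ [b])).dropLast = a :: w := by
  rw [show a :: (w ++ [b]) = (a :: w) ++ [b] by simp, List.dropLast_concat]

lemma replicate_pal (n : ℕ) (a : A) :
    (List.replicate n a).reverse = List.replicate n a := List.reverse_replicate (n := n) (a := a)

end Shift

noncomputable section UBounds
variable {A : Type*} [Fintype A] [DecidableEq A] {u : ℕ → A}

lemma nonloopy_of_nonpal {w : List A} {a b : A} (hnp : w.reverse ≠ w)
    (hL : Loopy (a :: (w ++ [b]))) : False := by
  rw [Loopy, tail_ext, dropLast_ext] at hL
  rcases hL with h | h
  · obtain ⟨h1, -⟩ := shift_eq w a b h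
    exact hnp (by rw [h1]; exact replicate_pal _ _)
  · rw [List.reverse_cons] at h
    have h2 := (List.append_inj h (by simp)).1
    exact hnp h2.symm

lemma cls_ext_ne_of_nonpal {w : List A} {a b : A} (hnp : w.reverse ≠ w) :
    cls (a :: w) ≠ cls (w ++ [b]) := by
  intro h
  rcases cls_eq_iff.mp h with h | h
  · obtain ⟨h1, -⟩ := shift_eq w a b h.symm
    exact hnp (by rw [h1]; exact replicate_pal _ _)
  · rw [List.reverse_append, List.reverse_singleton] at h
    simp only [List.singleton_append, List.cons.injEq] at h
    exact hnp h.2.symm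

lemma ep_ext (p : A × A) (w : List A) :
    ((epq (cls (p.1 :: (w ++ [p.2])))).1 = cls (p.1 :: w) ∧
     (epq (cls (p.1 :: (w ++ [p.2])))).2 = cls (w ++ [p.2])) ∨
    ((epq (cls (p.1 :: (w ++ [p.2])))).1 = cls (w ++ [p.2]) ∧
     (epq (cls (p.1 :: (w ++ [p.2])))).2 = cls (p.1 :: w)) := by
  rcases epq_cls (p.1 :: (w ++ [p.2])) with h | h
  · left
    rw [h, dropLast_ext, tail_ext]
    exact ⟨rfl, rfl⟩
  · right
    rw [h, dropLast_ext, tail_ext]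
    exact ⟨rfl, rfl⟩

lemma U1 (hall : AllLettersOccur u) (hcur : ClosedUnderReversal u)
    (hC : ∀ n : ℕ, complexity u n = (Fintype.card A - 1) * n + 1)
    (hP : ∀ n : ℕ, palComplexity u n + palComplexity u (n + 1) = Fintype.card A + 1)
    {w : List A} (hb : Bispecial u w) (hnp : w.reverse ≠ w) :
    bilateralOrder u w ≤ 0 := by
  classical
  set N := w.length + 1 with hN
  set F := (BextF u w).image (fun p => cls (p.1 :: (w ++ [p.2]))) with hF
  have hmemLn : ∀ p ∈ BextF u w, (p.1 :: (w ++ [p.2])) ∈ Ln u (N + 1) := by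
    intro p hp
    rw [mem_Ln]
    exact ⟨by simp [hN], (mem_BextF u).mp hp⟩
  have hFE : F ⊆ EnlF u N := by
    intro c hc
    rw [hF, Finset.mem_image] at hc
    obtain ⟨p, hp, rfl⟩ := hc
    exact (mem_EnlF u).mpr ⟨_, hmemLn p hp, fun hL => nonloopy_of_nonpal hnp hL, rfl⟩
  have hFcard : F.card = (BextF u w).card := by
    rw [hF]
    apply Finset.card_image_of_injOn
    intro p hp q hq hpq
    rcases cls_eq_iff.mp hpq with h | h
    · simp only [List.cons.injEq] at h
      obtain ⟨h1, h2⟩ := h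
      have h3 : p.2 = q.2 := by
        have := List.append_cancel_left h2
        simpa using this
      exact Prod.ext h1 h3
    · rw [rev_ext] at h
      simp only [List.cons.injEq] at h
      have h2 := (List.append_inj h.2 (by simp)).1
      exact absurd h2.symm hnp
  have hFnl : ∀ c ∈ F, (epq c).1 ≠ (epq c).2 := by
    intro c hc
    rw [hF, Finset.mem_image] at hc
    obtain ⟨p, hp, rfl⟩ := hc
    rcases ep_ext p w with ⟨h1, h2⟩ | ⟨h1, h2⟩ <;> rw [h1, h2]
    · exact cls_ext_ne_of_nonpal hnp
    · exact (cls_ext_ne_of_nonpal hnp).symm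
  have hFne : F.Nonempty := by
    obtain ⟨a, ha⟩ := LextF_nonempty hcur hb.1
    obtain ⟨b, hbp⟩ := lext_bext ha
    exact ⟨_, Finset.mem_image_of_mem _ hbp⟩
  have htouch : F.biUnion (fun c => {(epq c).1, (epq c).2})
      ⊆ (LextF u w).image (fun a => cls (a :: w))
        ∪ (RextF u w).image (fun b => cls (w ++ [b])) := by
    intro y hy
    rw [Finset.mem_biUnion] at hy
    obtain ⟨c, hc, hyc⟩ := hy
    rw [hF, Finset.mem_image] at hc
    obtain ⟨p, hp, rfl⟩ := hc
    simp only [Finset.mem_insert, Finset.mem_singleton] at hyc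
    rw [Finset.mem_union]
    have hL : cls (p.1 :: w) ∈ (LextF u w).image (fun a => cls (a :: w)) :=
      Finset.mem_image_of_mem _ (bext_left hp)
    have hR : cls (w ++ [p.2]) ∈ (RextF u w).image (fun b => cls (w ++ [b])) :=
      Finset.mem_image_of_mem _ (bext_right hp)
    rcases ep_ext p w with ⟨h1, h2⟩ | ⟨h1, h2⟩ <;> rcases hyc with h3 | h3 <;>
      rw [h3]
    · rw [h1]; exact Or.inl hL
    · rw [h2]; exact Or.inr hR
    · rw [h1]; exact Or.inr hR
    · rw [h2]; exact Or.inl hL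
  have htree := enl_card hall hcur hC hP N
  have hVne : (VqF u N).Nonempty :=
    ⟨cls (word u 0 N), cls_mem_VqF u ((mem_Ln u).mpr
      ⟨word_length u 0 N, isFactor_word u 0 N⟩)⟩
  have hmain := tree_subset_bound (VqF u N) (EnlF u N) epq (wf_quot u N)
    (conn_quot hcur N) hVne htree.le F hFE hFnl hFne
  have ht2 : (F.biUnion (fun c => {(epq c).1, (epq c).2})).card
      ≤ (LextF u w).card + (RextF u w).card := by
    refine le_trans (Finset.card_le_card htouch) (le_trans (Finset.card_union_le _ _) ?_)
    exact Nat.add_le_add (Finset.card_image_le) (Finset.card_image_le)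
  rw [bilateralOrder_eq]
  have hfin : (BextF u w).card + 1 ≤ (LextF u w).card + (RextF u w).card := by
    omega
  omega

lemma U2 (hall : AllLettersOccur u) (hcur : ClosedUnderReversal u)
    (hC : ∀ n : ℕ, complexity u n = (Fintype.card A - 1) * n + 1)
    (hP : ∀ n : ℕ, palComplexity u n + palComplexity u (n + 1) = Fintype.card A + 1)
    {w : List A} (hb : Bispecial u w) (hpal : w.reverse = w) :
    bilateralOrder u w ≤ ((PextF u w).card : ℤ) - 1 := by
  classical
  set N := w.length + 1 with hN
  have hLR := LextF_eq_RextF_of_pal hcur hpal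
  set diag := (BextF u w).filter (fun p => p.1 = p.2) with hdiagdef
  set offd := (BextF u w).filter (fun p => ¬ p.1 = p.2) with hoffdef
  have hsplit : diag.card + offd.card = (BextF u w).card :=
    Finset.card_filter_add_card_filter_not _
  have hdiag : (PextF u w).card = diag.card := by
    have himg : PextF u w = diag.image (fun p => p.1 :: (w ++ [p.1])) := by
      ext v
      rw [mem_PextF, Finset.mem_image]
      constructor
      · rintro ⟨a, rfl, hfac⟩
        refine ⟨(a, a), ?_, rfl⟩
        rw [hdiagdef, Finset.mem_filter, mem_BextF]
        exact ⟨hfac, rfl⟩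
      · rintro ⟨p, hp, rfl⟩
        rw [hdiagdef, Finset.mem_filter, mem_BextF] at hp
        refine ⟨p.1, rfl, ?_⟩
        have := hp.1
        rwa [← hp.2] at this
    rw [himg]
    apply Finset.card_image_of_injOn
    intro p hp q hq hpq
    simp only [Finset.mem_coe, hdiagdef, Finset.mem_filter] at hp hq
    simp only [List.cons.injEq] at hpq
    have h2 : p.1 = q.1 := hpq.1
    exact Prod.ext h2 (by rw [← hp.2, ← hq.2, h2])
  have hsymm : ∀ p : A × A, p ∈ BextF u w → (p.2, p.1) ∈ BextF u w := by
    intro p hp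
    rw [mem_BextF] at hp ⊢
    have := hcur _ hp
    rw [rev_ext, hpal] at this
    exact this
  set F := offd.image (fun p => cls (p.1 :: (w ++ [p.2]))) with hF
  have hclsR : ∀ b : A, cls (w ++ [b]) = cls (b :: w) := by
    intro b
    apply cls_eq_iff.mpr
    right
    rw [List.reverse_cons, hpal]
  have hfib : ∀ q ∈ offd, offd.filter
      (fun p => cls (p.1 :: (w ++ [p.2])) = cls (q.1 :: (w ++ [q.2])))
      = {q, (q.2, q.1)} := by
    intro q hq
    have hq' := Finset.mem_filter.mp hq
    ext p
    simp only [Finset.mem_filter, Finset.mem_insert, Finset.mem_singleton]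
    constructor
    · rintro ⟨hpo, hcl⟩
      rcases cls_eq_iff.mp hcl with h | h
      · left
        simp only [List.cons.injEq] at h
        refine Prod.ext h.1 ?_
        have := List.append_cancel_left h.2
        simpa using this
      · right
        rw [rev_ext, hpal] at h
        simp only [List.cons.injEq] at h
        refine Prod.ext h.1 ?_
        have := List.append_cancel_left h.2
        simpa using this
    · rintro (rfl | rfl)
      · exact ⟨hq, rfl⟩
      · refine ⟨?_, ?_⟩
        · rw [hoffdef, Finset.mem_filter]
          exact ⟨hsymm q hq'.1, fun h => hq'.2 h.symm⟩
        · apply cls_eq_iff.mpr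
          right
          rw [rev_ext, hpal]
  have h2F : offd.card = 2 * F.card := by
    rw [hF, Finset.card_eq_sum_card_image (fun p => cls (p.1 :: (w ++ [p.2]))) offd]
    have hconst : ∀ c ∈ offd.image (fun p => cls (p.1 :: (w ++ [p.2]))),
        (offd.filter (fun p => cls (p.1 :: (w ++ [p.2])) = c)).card = 2 := by
      intro c hc
      rw [Finset.mem_image] at hc
      obtain ⟨q, hq, rfl⟩ := hc
      rw [hfib q hq]
      have hq' := Finset.mem_filter.mp hq
      rw [Finset.card_insert_of_notMem, Finset.card_singleton]
      simp only [Finset.mem_singleton]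
      intro h
      have h2 := congrArg Prod.fst h
      simp only at h2
      exact hq'.2 h2
    rw [Finset.sum_congr rfl hconst, Finset.sum_const, smul_eq_mul, Nat.mul_comm]
  have hFE : F ⊆ EnlF u N := by
    intro c hc
    rw [hF, Finset.mem_image] at hc
    obtain ⟨p, hp, rfl⟩ := hc
    have hp' := Finset.mem_filter.mp hp
    refine (mem_EnlF u).mpr ⟨_, ?_, ?_, rfl⟩
    · rw [mem_Ln]
      exact ⟨by simp [hN], (mem_BextF u).mp hp'.1⟩
    · intro hL
      rw [Loopy, tail_ext, dropLast_ext] at hL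
      rcases hL with h | h
      · obtain ⟨-, h2⟩ := shift_eq w p.1 p.2 h
        exact hp'.2 h2.symm
      · rw [List.reverse_cons, hpal] at h
        have h2 : p.2 = p.1 := by
          have := List.append_cancel_left h
          simpa using this
        exact hp'.2 h2.symm
  have hepne : ∀ p ∈ offd, cls (p.1 :: w) ≠ cls (w ++ [p.2]) := by
    intro p hp h
    have hp' := Finset.mem_filter.mp hp
    rcases cls_eq_iff.mp h with h | h
    · obtain ⟨-, h2⟩ := shift_eq w p.1 p.2 h.symm
      exact hp'.2 h2.symm
    · rw [List.reverse_append, List.reverse_singleton, hpal] at h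
      simp only [List.singleton_append, List.cons.injEq] at h
      exact hp'.2 h.1
  have hFnl : ∀ c ∈ F, (epq c).1 ≠ (epq c).2 := by
    intro c hc
    rw [hF, Finset.mem_image] at hc
    obtain ⟨p, hp, rfl⟩ := hc
    rcases ep_ext p w with ⟨h1, h2⟩ | ⟨h1, h2⟩ <;> rw [h1, h2]
    · exact hepne p hp
    · exact (hepne p hp).symm
  have htouch : F.biUnion (fun c => {(epq c).1, (epq c).2})
      ⊆ (LextF u w).image (fun a => cls (a :: w)) := by
    intro y hy
    rw [Finset.mem_biUnion] at hy
    obtain ⟨c, hc, hyc⟩ := hy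
    rw [hF, Finset.mem_image] at hc
    obtain ⟨p, hp, rfl⟩ := hc
    have hp' := Finset.mem_filter.mp hp
    simp only [Finset.mem_insert, Finset.mem_singleton] at hyc
    have hL : cls (p.1 :: w) ∈ (LextF u w).image (fun a => cls (a :: w)) :=
      Finset.mem_image_of_mem _ (bext_left hp'.1)
    have hR : cls (w ++ [p.2]) ∈ (LextF u w).image (fun a => cls (a :: w)) := by
      rw [hclsR]
      refine Finset.mem_image_of_mem _ ?_
      rw [hLR]
      exact bext_right hp'.1
    rcases ep_ext p w with ⟨h1, h2⟩ | ⟨h1, h2⟩ <;> rcases hyc with h3 | h3 <;> rw [h3]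
    · rw [h1]; exact hL
    · rw [h2]; exact hR
    · rw [h1]; exact hR
    · rw [h2]; exact hL
  have hm1 : 1 ≤ (LextF u w).card := Finset.card_pos.mpr (LextF_nonempty hcur hb.1)
  have hRL : (RextF u w).card = (LextF u w).card := by rw [hLR]
  rw [bilateralOrder_eq, hdiag, hRL]
  rcases Finset.eq_empty_or_nonempty F with hFe | hFne
  · have hoffd0 : offd.card = 0 := by rw [h2F, hFe]; simp
    omega
  · have htree := enl_card hall hcur hC hP N
    have hVne : (VqF u N).Nonempty :=
      ⟨cls (word u 0 N), cls_mem_VqF u ((mem_Ln u).mpr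
        ⟨word_length u 0 N, isFactor_word u 0 N⟩)⟩
    have hmain := tree_subset_bound (VqF u N) (EnlF u N) epq (wf_quot u N)
      (conn_quot hcur N) hVne htree.le F hFE hFnl hFne
    have ht2 : (F.biUnion (fun c => {(epq c).1, (epq c).2})).card
        ≤ (LextF u w).card := by
      exact le_trans (Finset.card_le_card htouch) (Finset.card_image_le)
    omega

end UBounds

noncomputable section Forward
variable {A : Type*} [Fintype A] [DecidableEq A] {u : ℕ → A}

open Classical in
lemma sum_pext (hcur : ClosedUnderReversal u)
    (hP : ∀ n : ℕ, palComplexity u n + palComplexity u (n + 1) = Fintype.card A + 1)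
    (n : ℕ) :
    ∑ w ∈ (PalF u n).filter (Bispecial u), (((PextF u w).card : ℤ) - 1) = 0 := by
  have hstep : (PalF u (n + 2)).card = (PalF u n).card := by
    have h1 := hP n
    have h2 := hP (n + 1)
    rw [palComplexity_eq, palComplexity_eq] at h1 h2
    rw [show n + 1 + 1 = n + 2 from rfl] at h2
    omega
  have h1 : ((PalF u (n+2)).card : ℤ) = ∑ w ∈ PalF u n, ((PextF u w).card : ℤ) := by
    rw [card_PalF_succ2]
    push_cast
    rfl
  have h3 : ∑ w ∈ PalF u n, (((PextF u w).card : ℤ) - 1)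
      = ∑ w ∈ (PalF u n).filter (Bispecial u), (((PextF u w).card : ℤ) - 1) := by
    symm
    apply Finset.sum_filter_of_ne
    intro w hw hne
    by_contra hnb
    rw [pext_card_nonbisp hcur ((mem_PalF u).mp hw).2.1 ((mem_PalF u).mp hw).2.2 hnb] at hne
    simp at hne
  have h2 : ∑ w ∈ PalF u n, (((PextF u w).card : ℤ) - 1)
      = ((PalF u (n+2)).card : ℤ) - (PalF u n).card := by
    rw [Finset.sum_sub_distrib, ← h1]
    simp
  rw [← h3, h2, hstep]
  ring

open Classical in
lemma forward_dir (hall : AllLettersOccur u) (hcur : ClosedUnderReversal u)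
    (hC : ∀ n : ℕ, complexity u n = (Fintype.card A - 1) * n + 1)
    (hP : ∀ n : ℕ, palComplexity u n + palComplexity u (n + 1) = Fintype.card A + 1) :
    ∀ w : List A, Bispecial u w →
      (w.reverse ≠ w → bilateralOrder u w = 0) ∧
      (w.reverse = w → bilateralOrder u w = (Set.ncard (Pext u w) : ℤ) - 1) := by
  intro w₀ hb₀
  set n := w₀.length with hn
  set Bn := (Ln u n).filter (Bispecial u) with hBn
  set Bp := Bn.filter (fun w => w.reverse = w) with hBp
  set Bq := Bn.filter (fun w => ¬ w.reverse = w) with hBq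
  have hsplit : ∑ w ∈ Bp, bilateralOrder u w + ∑ w ∈ Bq, bilateralOrder u w
      = ∑ w ∈ Bn, bilateralOrder u w :=
    Finset.sum_filter_add_sum_filter_not Bn _ _
  have hS : ∑ w ∈ Bn, bilateralOrder u w = 0 := sum_bilateral_bisp hcur hC n
  have hBpeq : (PalF u n).filter (Bispecial u) = Bp := by
    ext w
    simp only [hBp, hBn, Finset.mem_filter, mem_PalF, mem_Ln]
    tauto
  have hsum2 : ∑ w ∈ Bp, (((PextF u w).card : ℤ) - 1) = 0 := by
    rw [← hBpeq]
    exact sum_pext hcur hP n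
  have hle1 : ∀ w ∈ Bq, bilateralOrder u w ≤ 0 := by
    intro w hw
    simp only [hBq, hBn, Finset.mem_filter] at hw
    exact U1 hall hcur hC hP hw.1.2 hw.2
  have hle2 : ∀ w ∈ Bp, bilateralOrder u w ≤ ((PextF u w).card : ℤ) - 1 := by
    intro w hw
    simp only [hBp, hBn, Finset.mem_filter] at hw
    exact U2 hall hcur hC hP hw.1.2 hw.2
  have hq0 : ∑ w ∈ Bq, bilateralOrder u w ≤ 0 := Finset.sum_nonpos hle1
  have hp1 : ∑ w ∈ Bp, bilateralOrder u w ≤ ∑ w ∈ Bp, (((PextF u w).card : ℤ) - 1) :=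
    Finset.sum_le_sum hle2
  have e2 : ∑ w ∈ Bq, bilateralOrder u w = 0 := by linarith
  have e1 : ∑ w ∈ Bp, bilateralOrder u w = ∑ w ∈ Bp, (((PextF u w).card : ℤ) - 1) := by
    linarith
  have hterm1 := (Finset.sum_eq_zero_iff_of_nonpos hle1).mp e2
  have hterm2 := (Finset.sum_eq_sum_iff_of_le hle2).mp e1
  constructor
  · intro hnp
    refine hterm1 w₀ ?_
    simp only [hBq, hBn, Finset.mem_filter, mem_Ln]
    refine ⟨⟨⟨?_, hb₀.1⟩, hb₀⟩, hnp⟩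
    trivial
  · intro hpal
    have h := hterm2 w₀ (by
      simp only [hBp, hBn, Finset.mem_filter, mem_Ln]
      refine ⟨⟨⟨?_, hb₀.1⟩, hb₀⟩, hpal⟩
      trivial)
    rw [pext_card]
    exact h

end Forward

/-- For an infinite word over a `k`-letter alphabet with language
closed under reversal and `C(n) = (k−1)n + 1` for all `n`: Property P (namely
`P(n) + P(n+1) = k + 1` for all `n`) holds iff every bispecial factor `w`
satisfies `b(w) = 0` when `w` is non-palindromic and `b(w) = #Pext(w) − 1`
when `w` is a palindrome. -/
theorem stmt19 {A : Type*} [Fintype A] (u : ℕ → A)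
    (hall : AllLettersOccur u)
    (hcur : ClosedUnderReversal u)
    (hC : ∀ n : ℕ, complexity u n = (Fintype.card A - 1) * n + 1) :
    (∀ n : ℕ, palComplexity u n + palComplexity u (n + 1) = Fintype.card A + 1) ↔
      ∀ w : List A, Bispecial u w →
        (w.reverse ≠ w → bilateralOrder u w = 0) ∧
        (w.reverse = w → bilateralOrder u w = (Set.ncard (Pext u w) : ℤ) - 1) := by
  classical
  constructor
  · intro hP
    exact forward_dir hall hcur hC hP
  · intro H
    exact backward_dir hall hcur hC H
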